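/- Let 3 ≤ k ≤ 8 and let V ⊆ 𝔽₂ᵏ be a binary code every nonzero element of which has weight exactly 4, and suppose dim V ≥ k − ⌊(k+2)/2⌋. Then the pair (k, dim V) is one of (4,1), (6,2), (7,3), (8,3). -/

import Mathlib

/-- Let `3 ≤ k ≤ 8` and let `V ⊆ 𝔽₂ᵏ` be a binary code every
nonzero element of which has weight exactly `4`, with `dim V ≥ k − ⌊(k+2)/2⌋`.
Then `(k, dim V)` is one of `(4,1)`, `(6,2)`, `(7,3)`, `(8,3)`. -/
theorem weight_four_code_numerical_possibilities (k : ℕ) (hk₁ : 3 ≤ k) (hk₂ : k ≤ 8)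
    (V : Submodule (ZMod 2) (Fin k → ZMod 2))
    (hV : ∀ v ∈ V, v ≠ 0 → (Finset.univ.filter fun i => v i ≠ 0).card = 4)
    (hdim : k - (k + 2) / 2 ≤ Module.finrank (ZMod 2) V) :
    (k = 4 ∧ Module.finrank (ZMod 2) V = 1) ∨
    (k = 6 ∧ Module.finrank (ZMod 2) V = 2) ∨
    (k = 7 ∧ Module.finrank (ZMod 2) V = 3) ∨
    (k = 8 ∧ Module.finrank (ZMod 2) V = 3) := by
  classical
  obtain ⟨d, hd⟩ : ∃ d, Module.finrank (ZMod 2) V = d := ⟨_, rfl⟩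
  rw [hd] at hdim ⊢
  have hd1 : 1 ≤ d := le_trans (by omega) hdim
  obtain ⟨S, hSdef⟩ : ∃ S : Finset (Fin k → ZMod 2), S = Finset.univ.filter (· ∈ V) := ⟨_, rfl⟩
  have hmemS : ∀ v, v ∈ S ↔ v ∈ V := by
    intro v; simp [hSdef]
  have hcardS : S.card = 2 ^ d := by
    have := Module.card_eq_pow_finrank (K := ZMod 2) (V := V)
    rw [ZMod.card, hd] at this
    rw [← this, hSdef]
    rw [← Fintype.card_subtype]
  -- each coordinate count is 0 or 2^(d-1)
  have key : ∀ i : Fin k, (S.filter fun v => v i ≠ 0).card = 0 ∨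
      (S.filter fun v => v i ≠ 0).card = 2 ^ (d - 1) := by
    intro i
    by_cases h : ∀ v ∈ S, v i = 0
    · left
      rw [Finset.card_eq_zero, Finset.filter_eq_empty_iff]
      intro v hv
      simpa using h v hv
    · right
      push_neg at h
      obtain ⟨v₀, hv₀S, hv₀i⟩ := h
      have h2d : 2 ^ d = 2 * 2 ^ (d - 1) := by
        rw [← pow_succ']
        congr 1
        omega
      have hbij : (S.filter fun v => v i = 0).card = (S.filter fun v => v i ≠ 0).card := by
        apply Finset.card_nbij' (fun v => v + v₀) (fun v => v + v₀)
        · intro a ha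
          change a ∈ S.filter (fun v => v i = 0) at ha
          show a + v₀ ∈ S.filter fun v => v i ≠ 0
          simp only [Finset.mem_filter, hmemS] at ha ⊢
          refine ⟨V.add_mem ha.1 ((hmemS v₀).1 hv₀S), ?_⟩
          have : a i + v₀ i ≠ 0 := by
            rw [ha.2]
            simpa using hv₀i
          simpa using this
        · intro a ha
          change a ∈ S.filter (fun v => v i ≠ 0) at ha
          show a + v₀ ∈ S.filter fun v => v i = 0
          simp only [Finset.mem_filter, hmemS] at ha ⊢
          refine ⟨V.add_mem ha.1 ((hmemS v₀).1 hv₀S), ?_⟩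
          have h1 : a i = 1 := by
            have := ha.2; revert this; generalize a i = x; revert x; decide
          have h2 : v₀ i = 1 := by
            revert hv₀i; generalize v₀ i = x; revert x; decide
          show a i + v₀ i = 0
          rw [h1, h2]; decide
        · intro a _
          funext j
          show a j + v₀ j + v₀ j = a j
          generalize a j = x; generalize v₀ j = y; revert x y; decide
        · intro a _
          funext j
          show a j + v₀ j + v₀ j = a j
          generalize a j = x; generalize v₀ j = y; revert x y; decide
      have hsplit : (S.filter fun v : Fin k → ZMod 2 => v i = 0).card
          + (S.filter fun v : Fin k → ZMod 2 => v i ≠ 0).card = 2 ^ d := by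
        rw [← hcardS]
        exact Finset.card_filter_add_card_filter_not (p := fun v : Fin k → ZMod 2 => v i = 0)
      have h2c : 2 * (S.filter fun v : Fin k → ZMod 2 => v i ≠ 0).card = 2 * 2 ^ (d - 1) := by
        rw [two_mul]
        nth_rewrite 1 [← hbij]
        rw [hsplit, h2d]
      exact Nat.eq_of_mul_eq_mul_left (by norm_num) h2c
  -- double counting
  have hsum : ∑ i : Fin k, (S.filter fun v => v i ≠ 0).card = 4 * (2 ^ d - 1) := by
    have lhs : ∑ i : Fin k, (S.filter fun v => v i ≠ 0).card
        = ∑ v ∈ S, (Finset.univ.filter fun i => v i ≠ 0).card := by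
      simp only [Finset.card_filter]
      rw [Finset.sum_comm]
    rw [lhs]
    have h0S : (0 : Fin k → ZMod 2) ∈ S := (hmemS 0).2 V.zero_mem
    rw [← Finset.add_sum_erase S _ h0S]
    have hz : (Finset.univ.filter fun i => (0 : Fin k → ZMod 2) i ≠ 0).card = 0 := by
      simp
    rw [hz, zero_add]
    rw [Finset.sum_congr rfl (fun v hv => ?_), Finset.sum_const, Finset.card_erase_of_mem h0S,
      hcardS, smul_eq_mul, Nat.mul_comm]
    exact hV v ((hmemS v).1 (Finset.mem_of_mem_erase hv)) (Finset.ne_of_mem_erase hv)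
  -- divisibility and bound
  have hdvd : 2 ^ (d - 1) ∣ 4 * (2 ^ d - 1) := by
    rw [← hsum]
    apply Finset.dvd_sum
    intro i _
    rcases key i with h | h <;> simp [h]
  have hle : 4 * (2 ^ d - 1) ≤ k * 2 ^ (d - 1) := by
    rw [← hsum]
    calc ∑ i : Fin k, (S.filter fun v => v i ≠ 0).card
        ≤ ∑ _i : Fin k, 2 ^ (d - 1) := by
          apply Finset.sum_le_sum
          intro i _
          rcases key i with h | h
          · rw [h]; exact Nat.zero_le _
          · exact le_of_eq h
      _ = k * 2 ^ (d - 1) := by simp [Finset.sum_const, Nat.mul_comm]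
  clear hsum key hV hmemS hSdef hcardS
  have hd3 : d ≤ 3 := by
    by_contra hcon
    push_neg at hcon
    have h8 : (8 : ℕ) ∣ 4 * (2 ^ d - 1) := by
      refine dvd_trans ?_ hdvd
      have : (2:ℕ) ^ 3 ∣ 2 ^ (d - 1) := pow_dvd_pow 2 (by omega)
      simpa using this
    obtain ⟨f, hf⟩ := h8
    have h16 : (2:ℕ) ^ d = 16 * 2 ^ (d - 4) := by
      rw [show d = 4 + (d - 4) by omega, pow_add]
      norm_num
    have hB1 : 1 ≤ (2:ℕ) ^ (d - 4) := Nat.one_le_two_pow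
    obtain ⟨B, hB⟩ : ∃ B, (2:ℕ) ^ (d - 4) = B := ⟨_, rfl⟩
    rw [hB] at h16 hB1
    rw [h16] at hf
    omega
  have hcases : d = 1 ∨ d = 2 ∨ d = 3 := by omega
  rcases hcases with h | h | h
  · subst h
    norm_num at hle
    exact Or.inl ⟨by omega, rfl⟩
  · subst h
    norm_num at hle
    exact Or.inr (Or.inl ⟨by omega, rfl⟩)
  · subst h
    norm_num at hle
    have hk : k = 7 ∨ k = 8 := by omega
    rcases hk with h | h
    · exact Or.inr (Or.inr (Or.inl ⟨h, rfl⟩))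
    · exact Or.inr (Or.inr (Or.inr ⟨h, rfl⟩))
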